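/- Let Ω be a nonempty compact topological space and F_r a finite-dimensional linear subspace of C(Ω, ℝ) with the sup norm. Then there exists a finite set X ⊆ Ω with the following quasi-optimality property: for every f ∈ C(Ω, ℝ) and every g ∈ F_r satisfying max_{x ∈ X} |f(x) − g(x)| ≤ inf_{h ∈ F_r} max_{x ∈ X} |f(x) − h(x)| + inf_{h ∈ F_r} sup_{x ∈ Ω} |f(x) − h(x)|, one has sup_{x ∈ Ω} |f(x) − g(x)| ≤ 5 · inf_{h ∈ F_r} sup_{x ∈ Ω} |f(x) − h(x)|. -/

import Mathlib

/-- Quantitative content of Theorem 7 (TheMPS): for any finite-dimensional trial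
subspace `Fr ⊆ C(Ω, ℝ)` there is a finite point set `X ⊆ Ω` such that any near-best
discrete sup-norm approximation on `X` of a continuous function `f` from `Fr` is a
quasi-best sup-norm approximation on all of `Ω`, with factor 5. -/
theorem mps_discrete_quasi_optimality
    {Ω : Type*} [TopologicalSpace Ω] [CompactSpace Ω] [Nonempty Ω]
    (Fr : Submodule ℝ C(Ω, ℝ)) [FiniteDimensional ℝ Fr] :
    ∃ (X : Finset Ω) (hX : X.Nonempty),
      ∀ f : C(Ω, ℝ), ∀ g ∈ Fr,
        X.sup' hX (fun x => |f x - g x|) ≤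
            (⨅ h : Fr, X.sup' hX (fun x => |f x - (h : C(Ω, ℝ)) x|)) +
            (⨅ h : Fr, ‖f - (h : C(Ω, ℝ))‖) →
        ‖f - g‖ ≤ 5 * ⨅ h : Fr, ‖f - (h : C(Ω, ℝ))‖ := by
  classical
  -- every continuous map attains the max of its absolute value
  have hmax : ∀ u : C(Ω, ℝ), ∃ x : Ω, ∀ y, |u y| ≤ |u x| := by
    intro u
    obtain ⟨x, -, hx⟩ := isCompact_univ.exists_isMaxOn Set.univ_nonempty
      ((continuous_abs.comp u.continuous).continuousOn)
    exact ⟨x, fun y => hx (Set.mem_univ y)⟩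
  choose pt hpt using hmax
  -- a finite 1/4-net of the unit sphere of Fr
  obtain ⟨t, hts, htfin, hcover⟩ :=
    (isCompact_sphere (0 : Fr) 1).finite_cover_balls (e := (1:ℝ)/4) (by norm_num)
  obtain ⟨x₀⟩ := ‹Nonempty Ω›
  set X : Finset Ω :=
    insert x₀ (htfin.toFinset.image (fun h : Fr => pt (h : C(Ω, ℝ)))) with hXdef
  have hX : X.Nonempty := ⟨x₀, Finset.mem_insert_self _ _⟩
  -- the norming property with constant 4/3
  have hnorm : ∀ u : C(Ω, ℝ), u ∈ Fr →
      ‖u‖ ≤ (4/3) * X.sup' hX (fun x => |u x|) := by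
    intro u hu
    rcases eq_or_ne u 0 with rfl | hu0
    · have hsup : X.sup' hX (fun x => |(0 : C(Ω, ℝ)) x|) = 0 := by
        apply le_antisymm
        · exact Finset.sup'_le _ _ fun x _ => by simp
        · exact le_trans (by simp) (Finset.le_sup' _ (Finset.mem_insert_self x₀ _))
      rw [hsup]; simp
    · have hupos : 0 < ‖u‖ := norm_pos_iff.mpr hu0
      set u1 : Fr := ⟨u, hu⟩
      have hu1n : ‖u1‖ = ‖u‖ := rfl
      set v : Fr := ‖u1‖⁻¹ • u1 with hvdef
      have hv : v ∈ Metric.sphere (0 : Fr) 1 := by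
        rw [mem_sphere_zero_iff_norm, hvdef]
        change ‖‖u1‖⁻¹ • (u : C(Ω, ℝ))‖ = 1
        rw [norm_smul, norm_inv, hu1n]
        simp only [norm_norm]
        field_simp
      obtain ⟨h, hht, hvh⟩ := Set.mem_iUnion₂.mp (hcover hv)
      have hvhn : ‖v - h‖ < 1/4 := by
        have := Metric.mem_ball.mp hvh
        rwa [dist_eq_norm] at this
      have hhn : ‖h‖ = 1 := mem_sphere_zero_iff_norm.mp (hts hht)
      set x₁ : Ω := pt (h : C(Ω, ℝ))
      have hx₁X : x₁ ∈ X := by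
        apply Finset.mem_insert_of_mem
        exact Finset.mem_image.mpr ⟨h, htfin.mem_toFinset.mpr hht, rfl⟩
      -- h attains its norm 1 at x₁
      have hh1 : 1 ≤ |(h : C(Ω, ℝ)) x₁| := by
        have : ‖(h : C(Ω, ℝ))‖ ≤ |(h : C(Ω, ℝ)) x₁| := by
          rw [ContinuousMap.norm_le _ (abs_nonneg _)]
          intro x
          rw [Real.norm_eq_abs]
          exact hpt _ x
        calc (1:ℝ) = ‖h‖ := hhn.symm
          _ = ‖(h : C(Ω, ℝ))‖ := rfl
          _ ≤ |(h : C(Ω, ℝ)) x₁| := this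
      -- v is close to h at x₁
      have hvx : |(v : C(Ω, ℝ)) x₁ - (h : C(Ω, ℝ)) x₁| < 1/4 := by
        have h1 : ‖((v - h : Fr) : C(Ω, ℝ)) x₁‖ ≤ ‖((v - h : Fr) : C(Ω, ℝ))‖ :=
          ContinuousMap.norm_coe_le_norm _ _
        have h2 : ‖((v - h : Fr) : C(Ω, ℝ))‖ = ‖v - h‖ := rfl
        have h3 : ((v - h : Fr) : C(Ω, ℝ)) x₁ = (v : C(Ω, ℝ)) x₁ - (h : C(Ω, ℝ)) x₁ := by
          simp
        rw [h3, Real.norm_eq_abs] at h1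
        calc |(v : C(Ω, ℝ)) x₁ - (h : C(Ω, ℝ)) x₁| ≤ ‖((v - h : Fr) : C(Ω, ℝ))‖ := h1
          _ = ‖v - h‖ := h2
          _ < 1/4 := hvhn
      have hvx1 : 3/4 ≤ |(v : C(Ω, ℝ)) x₁| := by
        have := abs_sub_abs_le_abs_sub ((h : C(Ω, ℝ)) x₁) ((v : C(Ω, ℝ)) x₁)
        rw [abs_sub_comm] at this
        linarith
      have hvcoe : (v : C(Ω, ℝ)) x₁ = ‖u‖⁻¹ * u x₁ := by
        rw [hvdef]
        simp [u1, hu1n]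
      have hux : 3/4 * ‖u‖ ≤ |u x₁| := by
        have : |(v : C(Ω, ℝ)) x₁| = ‖u‖⁻¹ * |u x₁| := by
          rw [hvcoe, abs_mul, abs_inv, abs_norm]
        rw [this] at hvx1
        nlinarith [mul_le_mul_of_nonneg_left hvx1 hupos.le,
          mul_inv_cancel₀ hupos.ne', abs_nonneg (u x₁)]
      have hsup : |u x₁| ≤ X.sup' hX (fun x => |u x|) :=
        Finset.le_sup' (fun x => |u x|) hx₁X
      nlinarith
  refine ⟨X, hX, ?_⟩
  intro f g hg hyp
  set E : ℝ := ⨅ h : Fr, ‖f - (h : C(Ω, ℝ))‖ with hEdef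
  set d : ℝ := ⨅ h : Fr, X.sup' hX (fun x => |f x - (h : C(Ω, ℝ)) x|) with hddef
  have hbddE : BddBelow (Set.range fun h : Fr => ‖f - (h : C(Ω, ℝ))‖) :=
    ⟨0, by rintro _ ⟨h, rfl⟩; exact norm_nonneg _⟩
  have hbddd : BddBelow (Set.range fun h : Fr =>
      X.sup' hX (fun x => |f x - (h : C(Ω, ℝ)) x|)) := by
    refine ⟨0, ?_⟩
    rintro _ ⟨h, rfl⟩
    exact le_trans (abs_nonneg (f x₀ - (h : C(Ω, ℝ)) x₀))
      (Finset.le_sup' (fun x => |f x - (h : C(Ω, ℝ)) x|) (Finset.mem_insert_self x₀ _))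
  have hE0 : 0 ≤ E := le_ciInf fun h => norm_nonneg _
  have key : ∀ ε : ℝ, 0 < ε → ‖f - g‖ ≤ 5 * E + ε := by
    intro ε hε
    have hlt : E < E + ε/4 := by linarith
    obtain ⟨h, hh⟩ := exists_lt_of_ciInf_lt (hEdef ▸ hlt)
    -- pointwise bounds
    have hBx : ∀ x, |f x - (h : C(Ω, ℝ)) x| ≤ ‖f - (h : C(Ω, ℝ))‖ := by
      intro x
      have := ContinuousMap.norm_coe_le_norm (f - (h : C(Ω, ℝ))) x
      simpa [Real.norm_eq_abs] using this
    have hB : X.sup' hX (fun x => |f x - (h : C(Ω, ℝ)) x|) ≤ ‖f - (h : C(Ω, ℝ))‖ :=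
      Finset.sup'_le _ _ fun x _ => hBx x
    have hdle : d ≤ ‖f - (h : C(Ω, ℝ))‖ := le_trans (ciInf_le hbddd h) hB
    -- discrete bound on g - h
    have hgh : ∀ x ∈ X, |g x - (h : C(Ω, ℝ)) x| ≤
        X.sup' hX (fun x => |f x - g x|) + X.sup' hX (fun x => |f x - (h : C(Ω, ℝ)) x|) := by
      intro x hx
      have h1 : |g x - (h : C(Ω, ℝ)) x| ≤ |f x - g x| + |f x - (h : C(Ω, ℝ)) x| := by
        have := abs_sub (f x - (h : C(Ω, ℝ)) x) (f x - g x)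
        calc |g x - (h : C(Ω, ℝ)) x| = |(f x - (h : C(Ω, ℝ)) x) - (f x - g x)| := by ring_nf
          _ ≤ |f x - (h : C(Ω, ℝ)) x| + |f x - g x| := abs_sub _ _
          _ = |f x - g x| + |f x - (h : C(Ω, ℝ)) x| := by ring
      exact le_trans h1 (add_le_add (Finset.le_sup' (fun x => |f x - g x|) hx)
        (Finset.le_sup' (fun x => |f x - (h : C(Ω, ℝ)) x|) hx))
    have hghmem : g - (h : C(Ω, ℝ)) ∈ Fr := Fr.sub_mem hg h.2
    have hghn : ‖g - (h : C(Ω, ℝ))‖ ≤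
        (4/3) * X.sup' hX (fun x => |(g - (h : C(Ω, ℝ))) x|) := hnorm _ hghmem
    have hsupeq : X.sup' hX (fun x => |(g - (h : C(Ω, ℝ))) x|)
        = X.sup' hX (fun x => |g x - (h : C(Ω, ℝ)) x|) := by
      apply Finset.sup'_congr _ rfl
      intro x _
      simp
    have hghsup : X.sup' hX (fun x => |g x - (h : C(Ω, ℝ)) x|) ≤
        X.sup' hX (fun x => |f x - g x|) + X.sup' hX (fun x => |f x - (h : C(Ω, ℝ)) x|) :=
      Finset.sup'_le _ _ hgh
    -- triangle inequality in C(Ω, ℝ)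
    have htri : ‖f - g‖ ≤ ‖f - (h : C(Ω, ℝ))‖ + ‖g - (h : C(Ω, ℝ))‖ := by
      have : f - g = (f - (h : C(Ω, ℝ))) - (g - (h : C(Ω, ℝ))) := by abel
      rw [this]
      exact norm_sub_le _ _
    have hA : X.sup' hX (fun x => |f x - g x|) ≤ d + E := hyp
    -- combine
    have hfh : ‖f - (h : C(Ω, ℝ))‖ < E + ε/4 := hh
    have := hghn
    rw [hsupeq] at this
    nlinarith [hB, hdle, hA, htri, this, hghsup, hfh]
  have h5 : ‖f - g‖ ≤ 5 * E := le_of_forall_pos_le_add key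
  exact h5
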